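/- arXiv:2308.01665 — 4 statements merged into one kernel-verified Lean document; each statement's English description precedes it below -/
import Mathlib

section
/- The function φ : ℂ × ℝ → ℝ ∪ {∞} defined by φ(x, σ) = |x|²/(2σ) + σ/2 if σ > 0, φ(0,0) = 0, and φ(x, σ) = ∞ otherwise, is convex on ℂ × ℝ. -/
noncomputable def phi (x : ℂ) (σ : ℝ) : EReal :=
  if 0 < σ then ((‖x‖ ^ 2 / (2 * σ) + σ / 2 : ℝ) : EReal)
  else if x = 0 ∧ σ = 0 then 0 else ⊤

lemma phi_ne_bot (x : ℂ) (σ : ℝ) : phi x σ ≠ ⊥ := by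
  unfold phi
  split_ifs <;> simp

lemma key (x₁ x₂ : ℂ) (σ₁ σ₂ t : ℝ) (ht : 0 < t) (ht1 : t < 1) (h1 : 0 < σ₁) (h2 : 0 < σ₂) :
    ‖t • x₁ + (1 - t) • x₂‖ ^ 2 / (2 * (t * σ₁ + (1 - t) * σ₂))
      + (t * σ₁ + (1 - t) * σ₂) / 2 ≤
    t * (‖x₁‖ ^ 2 / (2 * σ₁) + σ₁ / 2)
      + (1 - t) * (‖x₂‖ ^ 2 / (2 * σ₂) + σ₂ / 2) := by
  have h1t : 0 < 1 - t := by linarith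
  set a := ‖x₁‖ with ha
  set b := ‖x₂‖ with hb
  have ha0 : 0 ≤ a := norm_nonneg _
  have hb0 : 0 ≤ b := norm_nonneg _
  have hs : 0 < t * σ₁ + (1 - t) * σ₂ := by
    have := mul_pos ht h1
    have := mul_pos h1t h2
    linarith
  have htri : ‖t • x₁ + (1 - t) • x₂‖ ≤ t * a + (1 - t) * b := by
    calc ‖t • x₁ + (1 - t) • x₂‖
        ≤ ‖t • x₁‖ + ‖(1 - t) • x₂‖ := norm_add_le _ _
      _ = t * a + (1 - t) * b := by
          rw [norm_smul, norm_smul,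
            Real.norm_eq_abs, Real.norm_eq_abs, abs_of_pos ht, abs_of_pos h1t]
  have hsq : ‖t • x₁ + (1 - t) • x₂‖ ^ 2 ≤ (t * a + (1 - t) * b) ^ 2 :=
    pow_le_pow_left₀ (norm_nonneg _) htri 2
  have hdiv : (t * a + (1 - t) * b) ^ 2 / (2 * (t * σ₁ + (1 - t) * σ₂)) ≤
      t * (a ^ 2 / (2 * σ₁)) + (1 - t) * (b ^ 2 / (2 * σ₂)) := by
    rw [div_le_iff₀ (by positivity)]
    rw [← sub_nonneg]
    have hkey : (t * (a ^ 2 / (2 * σ₁)) + (1 - t) * (b ^ 2 / (2 * σ₂))) *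
        (2 * (t * σ₁ + (1 - t) * σ₂)) - (t * a + (1 - t) * b) ^ 2 =
        t * (1 - t) * (a * σ₂ - b * σ₁) ^ 2 / (σ₁ * σ₂) := by
      field_simp; ring
    rw [hkey]
    exact div_nonneg (mul_nonneg (mul_nonneg ht.le h1t.le) (sq_nonneg _))
      (mul_pos h1 h2).le
  have h3 : ‖t • x₁ + (1 - t) • x₂‖ ^ 2 / (2 * (t * σ₁ + (1 - t) * σ₂)) ≤
      (t * a + (1 - t) * b) ^ 2 / (2 * (t * σ₁ + (1 - t) * σ₂)) := by
    gcongr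
  have := le_trans h3 hdiv
  linarith

lemma coe_mul_phi_ne_bot {c : ℝ} (hc : 0 < c) (x : ℂ) (σ : ℝ) :
    ((c : ℝ) : EReal) * phi x σ ≠ ⊥ := by
  unfold phi
  split_ifs
  · rw [← EReal.coe_mul]; exact EReal.coe_ne_bot _
  · simp
  · rw [EReal.coe_mul_top_of_pos hc]; simp

lemma phi_smul {c : ℝ} (hc : 0 < c) (x : ℂ) {σ : ℝ} (hσ : 0 < σ) :
    phi (c • x) (c * σ) = ((c : ℝ) : EReal) * phi x σ := by
  unfold phi
  rw [if_pos hσ, if_pos (mul_pos hc hσ), ← EReal.coe_mul, EReal.coe_eq_coe_iff]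
  have : ‖c • x‖ = c * ‖x‖ := by
    rw [norm_smul, Real.norm_eq_abs, abs_of_pos hc]
  rw [this]
  field_simp

theorem phi_convex :
    ∀ (x₁ x₂ : ℂ) (σ₁ σ₂ : ℝ) (t : ℝ), 0 ≤ t → t ≤ 1 →
      phi (t • x₁ + (1 - t) • x₂) (t * σ₁ + (1 - t) * σ₂) ≤
        (t : EReal) * phi x₁ σ₁ + ((1 - t : ℝ) : EReal) * phi x₂ σ₂ := by
  intro x₁ x₂ σ₁ σ₂ t ht0 ht1
  rcases eq_or_lt_of_le ht0 with h0 | h0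
  · rw [← h0]
    norm_num
  rcases eq_or_lt_of_le ht1 with h1' | h1'
  · rw [h1']
    norm_num
  have h1t : 0 < 1 - t := by linarith
  by_cases h1 : 0 < σ₁
  · by_cases h2 : 0 < σ₂
    · have hs : 0 < t * σ₁ + (1 - t) * σ₂ := by
        have := mul_pos h0 h1; have := mul_pos h1t h2; linarith
      unfold phi
      rw [if_pos hs, if_pos h1, if_pos h2, ← EReal.coe_mul, ← EReal.coe_mul,
        ← EReal.coe_add, EReal.coe_le_coe_iff]
      exact key x₁ x₂ σ₁ σ₂ t h0 h1' h1 h2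
    · by_cases hz : x₂ = 0 ∧ σ₂ = 0
      · obtain ⟨hx2, hs2⟩ := hz
        subst hx2; subst hs2
        have hφ2 : phi 0 0 = 0 := by unfold phi; simp
        rw [hφ2, mul_zero, add_zero, smul_zero, add_zero, mul_zero, add_zero]
        exact le_of_eq (phi_smul h0 x₁ h1)
      · have hφ2 : phi x₂ σ₂ = ⊤ := by unfold phi; rw [if_neg h2, if_neg hz]
        rw [hφ2, EReal.coe_mul_top_of_pos h1t,
          EReal.add_top_of_ne_bot (coe_mul_phi_ne_bot h0 x₁ σ₁)]
        exact le_top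
  · by_cases hz : x₁ = 0 ∧ σ₁ = 0
    · obtain ⟨hx1, hs1⟩ := hz
      subst hx1; subst hs1
      have hφ1 : phi 0 0 = 0 := by unfold phi; simp
      rw [hφ1, mul_zero, zero_add, smul_zero, zero_add, mul_zero, zero_add]
      by_cases h2 : 0 < σ₂
      · exact le_of_eq (phi_smul h1t x₂ h2)
      · by_cases hz2 : x₂ = 0 ∧ σ₂ = 0
        · obtain ⟨hx2, hs2⟩ := hz2
          subst hx2; subst hs2
          rw [smul_zero, mul_zero, hφ1, mul_zero]
        · have hφ2 : phi x₂ σ₂ = ⊤ := by unfold phi; rw [if_neg h2, if_neg hz2]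
          rw [hφ2, EReal.coe_mul_top_of_pos h1t]
          exact le_top
    · have hφ1 : phi x₁ σ₁ = ⊤ := by unfold phi; rw [if_neg h1, if_neg hz]
      rw [hφ1, EReal.coe_mul_top_of_pos h0,
        EReal.top_add_of_ne_bot (coe_mul_phi_ne_bot h1t x₂ σ₂)]
      exact le_top
end

section
/- Let τ > 0, σ ∈ ℝ, and x ∈ ℂ with 2τσ + |x|² ≤ τ². Then (0, 0) = argmin over (ξ, s) ∈ ℂ × ℝ of φ(ξ, s) + (1/(2τ))(|x − ξ|² + (σ − s)²), where φ(ξ,s) = |ξ|²/(2s) + s/2 for s > 0, φ(0,0) = 0, ∞ otherwise. -/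
lemma key_real (τ : ℝ) (hτ : 0 < τ) (a σ : ℝ) (ha : 0 ≤ a)
    (h : 2 * τ * σ + a ^ 2 ≤ τ ^ 2) (b s : ℝ) (hb : 0 ≤ b) (hs : 0 < s) :
    (a ^ 2 + σ ^ 2) / (2 * τ) <
      (b ^ 2 / (2 * s) + s / 2) + ((a - b) ^ 2 + (σ - s) ^ 2) / (2 * τ) := by
  rw [← sub_pos]
  have e : (b ^ 2 / (2 * s) + s / 2) + ((a - b) ^ 2 + (σ - s) ^ 2) / (2 * τ)
      - (a ^ 2 + σ ^ 2) / (2 * τ)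
      = ((τ * b - s * a) ^ 2 + s * τ * (b ^ 2 + s ^ 2)
          + s ^ 2 * (τ ^ 2 - a ^ 2 - 2 * τ * σ)) / (2 * τ ^ 2 * s) := by
    field_simp
    ring
  rw [e]
  apply div_pos
  · nlinarith [sq_nonneg (τ * b - s * a), mul_pos hs hτ, mul_pos (mul_pos hs hs) hτ,
      sq_nonneg s, sq_nonneg b, mul_pos hs hs]
  · positivity

theorem prox_case1 (τ : ℝ) (hτ : 0 < τ) (x : ℂ) (σ : ℝ)
    (h : 2 * τ * σ + ‖x‖ ^ 2 ≤ τ ^ 2) :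
    (∀ (ξ : ℂ) (s : ℝ),
      phi 0 0 + (((‖x - 0‖ ^ 2 + (σ - 0) ^ 2) / (2 * τ) : ℝ) : EReal) ≤
        phi ξ s + (((‖x - ξ‖ ^ 2 + (σ - s) ^ 2) / (2 * τ) : ℝ) : EReal)) ∧
    ∀ (ξ : ℂ) (s : ℝ), (ξ, s) ≠ ((0 : ℂ), (0 : ℝ)) →
      phi 0 0 + (((‖x - 0‖ ^ 2 + (σ - 0) ^ 2) / (2 * τ) : ℝ) : EReal) <
        phi ξ s + (((‖x - ξ‖ ^ 2 + (σ - s) ^ 2) / (2 * τ) : ℝ) : EReal) := by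
  have h00 : phi 0 0 = 0 := by simp [phi]
  have key : ∀ (ξ : ℂ) (s : ℝ), 0 < s →
      ((‖x - 0‖ ^ 2 + (σ - 0) ^ 2) / (2 * τ) : ℝ) <
        (‖ξ‖ ^ 2 / (2 * s) + s / 2) +
          ((‖x - ξ‖ ^ 2 + (σ - s) ^ 2) / (2 * τ)) := by
    intro ξ s hs
    have habs : (‖x‖ - ‖ξ‖) ^ 2 ≤ ‖x - ξ‖ ^ 2 := by
      have h2 : |‖x‖ - ‖ξ‖| ≤ ‖x - ξ‖ := abs_norm_sub_norm_le x ξ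
      calc (‖x‖ - ‖ξ‖) ^ 2 = |‖x‖ - ‖ξ‖| ^ 2 := (sq_abs _).symm
        _ ≤ ‖x - ξ‖ ^ 2 := by
            apply sq_le_sq' <;> nlinarith [abs_nonneg (‖x‖ - ‖ξ‖), norm_nonneg (x - ξ)]
    have hk := key_real τ hτ (‖x‖) σ (norm_nonneg x) h
      (‖ξ‖) s (norm_nonneg ξ) hs
    simp only [sub_zero]
    calc (‖x‖ ^ 2 + σ ^ 2) / (2 * τ)
        < (‖ξ‖ ^ 2 / (2 * s) + s / 2) +
          ((‖x‖ - ‖ξ‖) ^ 2 + (σ - s) ^ 2) / (2 * τ) := hk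
      _ ≤ _ := by
          gcongr
  have main : ∀ (ξ : ℂ) (s : ℝ), (ξ, s) ≠ ((0 : ℂ), (0 : ℝ)) →
      phi 0 0 + (((‖x - 0‖ ^ 2 + (σ - 0) ^ 2) / (2 * τ) : ℝ) : EReal) <
        phi ξ s + (((‖x - ξ‖ ^ 2 + (σ - s) ^ 2) / (2 * τ) : ℝ) : EReal) := by
    intro ξ s hne
    rw [h00, zero_add]
    by_cases hs : 0 < s
    · rw [phi, if_pos hs, ← EReal.coe_add]
      exact_mod_cast key ξ s hs
    · have hns : ¬(ξ = 0 ∧ s = 0) := by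
        intro ⟨h1, h2⟩; exact hne (by simp [h1, h2])
      rw [phi, if_neg hs, if_neg hns, EReal.top_add_of_ne_bot (by exact EReal.coe_ne_bot _)]
      exact EReal.coe_lt_top _
  refine ⟨fun ξ s => ?_, main⟩
  by_cases hzero : (ξ, s) = ((0 : ℂ), (0 : ℝ))
  · obtain ⟨h1, h2⟩ := Prod.mk.injEq .. ▸ hzero
    simp_all
  · exact le_of_lt (main ξ s hzero)
end

section
/- Let τ > 0, x = 0, and σ ∈ ℝ with 2σ > τ. Then (0, σ − τ/2) = argmin over (ξ, s) ∈ ℂ × ℝ of φ(ξ, s) + (1/(2τ))(|0 − ξ|² + (σ − s)²), where φ is the perspective function φ(ξ,s) = |ξ|²/(2s) + s/2 for s > 0, φ(0,0)=0, ∞ otherwise. -/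
lemma gident (τ σ s : ℝ) (hτ : 0 < τ) :
    s / 2 + (σ - s) ^ 2 / (2 * τ)
      = (σ - τ / 2) / 2 + (τ / 2) ^ 2 / (2 * τ) + (s - (σ - τ / 2)) ^ 2 / (2 * τ) := by
  field_simp
  ring

theorem prox_case2 (τ : ℝ) (hτ : 0 < τ) (σ : ℝ) (h : τ < 2 * σ) :
    (∀ (ξ : ℂ) (s : ℝ),
      phi 0 (σ - τ / 2) +
        (((‖(0 : ℂ) - 0‖ ^ 2 + (σ - (σ - τ / 2)) ^ 2) / (2 * τ) : ℝ) : EReal) ≤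
        phi ξ s + (((‖(0 : ℂ) - ξ‖ ^ 2 + (σ - s) ^ 2) / (2 * τ) : ℝ) : EReal)) ∧
    ∀ (ξ : ℂ) (s : ℝ), (ξ, s) ≠ ((0 : ℂ), σ - τ / 2) →
      phi 0 (σ - τ / 2) +
        (((‖(0 : ℂ) - 0‖ ^ 2 + (σ - (σ - τ / 2)) ^ 2) / (2 * τ) : ℝ) : EReal) <
        phi ξ s + (((‖(0 : ℂ) - ξ‖ ^ 2 + (σ - s) ^ 2) / (2 * τ) : ℝ) : EReal) := by
  have hσ : 0 < σ - τ / 2 := by linarith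
  have hL : phi 0 (σ - τ / 2) +
      (((‖(0 : ℂ) - 0‖ ^ 2 + (σ - (σ - τ / 2)) ^ 2) / (2 * τ) : ℝ) : EReal)
      = (((σ - τ / 2) / 2 + (τ / 2) ^ 2 / (2 * τ) : ℝ) : EReal) := by
    simp only [phi, if_pos hσ, sub_zero, norm_zero]
    rw [← EReal.coe_add]
    norm_num
  rw [hL]
  -- key strict real inequality
  have key : ∀ (ξ : ℂ) (s : ℝ), 0 < s → (ξ, s) ≠ ((0 : ℂ), σ - τ / 2) →
      (σ - τ / 2) / 2 + (τ / 2) ^ 2 / (2 * τ)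
        < ‖ξ‖ ^ 2 / (2 * s) + s / 2 + (‖ξ‖ ^ 2 + (σ - s) ^ 2) / (2 * τ) := by
    intro ξ s hs hne
    have ha : (0:ℝ) ≤ ‖ξ‖ ^ 2 := by positivity
    have h1 : (0:ℝ) ≤ ‖ξ‖ ^ 2 / (2 * s) := by positivity
    have h2 : (0:ℝ) ≤ ‖ξ‖ ^ 2 / (2 * τ) := by positivity
    have h3 : (0:ℝ) ≤ (s - (σ - τ / 2)) ^ 2 / (2 * τ) := by positivity
    have hg := gident τ σ s hτ
    rcases eq_or_ne ξ 0 with hξ | hξ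
    · have hsne : s ≠ σ - τ / 2 := by
        intro hh; exact hne (by simp [hξ, hh])
      have : (0:ℝ) < (s - (σ - τ / 2)) ^ 2 / (2 * τ) := by
        have : s - (σ - τ / 2) ≠ 0 := sub_ne_zero.mpr hsne
        positivity
      rw [add_div, ← add_assoc]
      linarith
    · have : (0:ℝ) < ‖ξ‖ ^ 2 / (2 * s) := by
        have : ‖ξ‖ ≠ 0 := by simpa using hξ
        positivity
      rw [add_div, ← add_assoc]
      linarith
  -- weak inequality for 0 < s (including equality point)
  have keyle : ∀ (ξ : ℂ) (s : ℝ), 0 < s →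
      (σ - τ / 2) / 2 + (τ / 2) ^ 2 / (2 * τ)
        ≤ ‖ξ‖ ^ 2 / (2 * s) + s / 2 + (‖ξ‖ ^ 2 + (σ - s) ^ 2) / (2 * τ) := by
    intro ξ s hs
    have h1 : (0:ℝ) ≤ ‖ξ‖ ^ 2 / (2 * s) := by positivity
    have h2 : (0:ℝ) ≤ ‖ξ‖ ^ 2 / (2 * τ) := by positivity
    have h3 : (0:ℝ) ≤ (s - (σ - τ / 2)) ^ 2 / (2 * τ) := by positivity
    have hg := gident τ σ s hτ
    rw [add_div, ← add_assoc]
    linarith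
  -- zero case strict
  have zcase : (σ - τ / 2) / 2 + (τ / 2) ^ 2 / (2 * τ) < (0 + σ ^ 2) / (2 * τ) := by
    have e1 : (σ - τ / 2) / 2 + (τ / 2) ^ 2 / (2 * τ) = σ / 2 - τ / 8 := by
      field_simp; ring
    rw [e1, zero_add, lt_div_iff₀ (by linarith : (0:ℝ) < 2 * τ)]
    nlinarith [sq_nonneg (σ - τ / 2)]
  have strict : ∀ (ξ : ℂ) (s : ℝ), (ξ, s) ≠ ((0 : ℂ), σ - τ / 2) →
      (((σ - τ / 2) / 2 + (τ / 2) ^ 2 / (2 * τ) : ℝ) : EReal)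
        < phi ξ s + (((‖(0 : ℂ) - ξ‖ ^ 2 + (σ - s) ^ 2) / (2 * τ) : ℝ) : EReal) := by
    intro ξ s hne
    simp only [phi, zero_sub, norm_neg]
    by_cases hs : 0 < s
    · rw [if_pos hs, ← EReal.coe_add, EReal.coe_lt_coe_iff]
      exact key ξ s hs hne
    · rw [if_neg hs]
      by_cases h0 : ξ = 0 ∧ s = 0
      · rw [if_pos h0, zero_add, EReal.coe_lt_coe_iff, h0.1, h0.2]
        simpa using zcase
      · rw [if_neg h0]
        rw [EReal.top_add_of_ne_bot (by exact EReal.coe_ne_bot _)]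
        exact EReal.coe_lt_top _
  constructor
  · intro ξ s
    by_cases hne : (ξ, s) = ((0 : ℂ), σ - τ / 2)
    · rw [show ξ = 0 from congrArg Prod.fst hne, show s = σ - τ / 2 from congrArg Prod.snd hne]
      rw [← hL]
    · exact le_of_lt (strict ξ s hne)
  · exact strict
end

section
/- Let τ > 0, σ ∈ ℝ, and x ∈ ℂ with x ≠ 0. Then the cubic equation s³ + ((2/τ)σ + 1)s − (2/τ)|x| = 0 has exactly one positive real root. -/
theorem unique_positive_root (τ σ : ℝ) (hτ : 0 < τ) (x : ℂ) (hx : x ≠ 0) :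
    ∃! s : ℝ, 0 < s ∧
      s ^ 3 + ((2 / τ) * σ + 1) * s - (2 / τ) * ‖x‖ = 0 := by
  set c : ℝ := (2 / τ) * σ + 1 with hc
  set d : ℝ := (2 / τ) * ‖x‖ with hd
  have hd0 : 0 < d := mul_pos (div_pos two_pos hτ) (norm_pos_iff.mpr hx)
  -- existence via IVT on [0, M]
  set M : ℝ := 1 + |c| + d with hM
  have hM1 : 1 ≤ M := by have := abs_nonneg c; linarith
  have hM0 : (0:ℝ) ≤ M := by linarith
  have hfM : 0 < M ^ 3 + c * M - d := by
    have h1 : -|c| ≤ c := neg_abs_le c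
    nlinarith [abs_nonneg c, sq_nonneg M]
  have hcont : ContinuousOn (fun s : ℝ => s ^ 3 + c * s - d) (Set.Icc 0 M) := by
    fun_prop
  have hsub := intermediate_value_Icc hM0 hcont
  have h0mem : (0:ℝ) ∈ Set.Icc ((fun s : ℝ => s ^ 3 + c * s - d) 0)
      ((fun s : ℝ => s ^ 3 + c * s - d) M) := by
    simp only [Set.mem_Icc]
    constructor <;> nlinarith
  obtain ⟨s, hsmem, hsroot⟩ := hsub h0mem
  have hs0 : 0 < s := by
    rcases lt_or_eq_of_le hsmem.1 with h | h
    · exact h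
    · exfalso; rw [← h] at hsroot; simp at hsroot; linarith
  have hsroot' : s ^ 3 + c * s - d = 0 := hsroot
  refine ⟨s, ⟨hs0, hsroot⟩, ?_⟩
  rintro t ⟨ht0, htroot⟩
  have hs2 : 0 < s ^ 2 + c := by nlinarith
  have ht2 : 0 < t ^ 2 + c := by nlinarith
  have hfac : (t - s) * (t ^ 2 + t * s + s ^ 2 + c) = 0 := by
    linear_combination htroot - hsroot'
  have hpos : 0 < t ^ 2 + t * s + s ^ 2 + c := by nlinarith [mul_pos ht0 hs0]
  have := mul_eq_zero.mp hfac
  rcases this with h | h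
  · linarith
  · linarith
end
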